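/- arXiv:1806.09595 — 2 statements merged into one kernel-verified Lean document; each statement's English description precedes it below -/
import Mathlib

section
/- (Appendix Lemma A.2, bound part) Let Θ ⊆ ℝ^d be open, f, g : Θ → ℝ with g nowhere zero, both p-times differentiable, and suppose there are functions φ, ψ : Θ → [1,∞) with |∂_θ^α f(θ)| ≤ |f(θ)| φ(θ)^{|α|} and |∂_θ^α g(θ)| ≤ ψ(θ) for all θ and all |α| ≤ p. Then there exists K ∈ [1,∞), depending only on d and p, such that the quotient h = f/g satisfies |∂_θ^α h(θ)| ≤ K |f(θ)/g(θ)| ( φ(θ)ψ(θ)/|g(θ)| )^{|α|} for all θ ∈ Θ and all multi-indices α with |α| ≤ p. -/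
/-- Partial derivative along coordinate `i`. -/
noncomputable def pd {d : ℕ} {F : Type*} [NormedAddCommGroup F] [NormedSpace ℝ F]
    (i : Fin d) (f : (Fin d → ℝ) → F) : (Fin d → ℝ) → F :=
  fun x => fderiv ℝ f x (Pi.single i 1)

/-- Iterated mixed partial derivative along the list of coordinates `L`;
`|α|` corresponds to `L.length`. -/
noncomputable def pdL {d : ℕ} {F : Type*} [NormedAddCommGroup F] [NormedSpace ℝ F]
    (L : List (Fin d)) (f : (Fin d → ℝ) → F) : (Fin d → ℝ) → F :=
  L.foldr pd f

namespace Stmt9Aux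

variable {d : ℕ}

lemma pdL_nil (u : (Fin d → ℝ) → ℝ) : pdL [] u = u := rfl

lemma pdL_cons (i : Fin d) (L : List (Fin d)) (u : (Fin d → ℝ) → ℝ) :
    pdL (i :: L) u = pd i (pdL L u) := rfl

/-! ### basic pd calculus -/

lemma line_hasDerivAt (x v : Fin d → ℝ) (t : ℝ) :
    HasDerivAt (fun s : ℝ => x + s • v) v t := by
  simpa using ((hasDerivAt_id t).smul_const v).const_add x

lemma pd_hasDerivAt {F : (Fin d → ℝ) → ℝ} {x : Fin d → ℝ} {i : Fin d}
    (hF : DifferentiableAt ℝ F x) :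
    HasDerivAt (fun t : ℝ => F (x + t • (Pi.single i 1 : Fin d → ℝ))) (pd i F x) 0 := by
  have h := hF.hasFDerivAt.comp_hasDerivAt_of_eq 0
      (line_hasDerivAt x (Pi.single i 1) 0) (by simp)
  exact h

lemma pd_eq_deriv {F : (Fin d → ℝ) → ℝ} {x : Fin d → ℝ} {i : Fin d}
    (hF : DifferentiableAt ℝ F x) :
    pd i F x = deriv (fun t : ℝ => F (x + t • (Pi.single i 1 : Fin d → ℝ))) 0 :=
  (pd_hasDerivAt hF).deriv.symm

lemma pd_congr {Θ : Set (Fin d → ℝ)} (hΘ : IsOpen Θ) {x : Fin d → ℝ} (hx : x ∈ Θ)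
    {F G : (Fin d → ℝ) → ℝ} (h : ∀ y ∈ Θ, F y = G y) {i : Fin d} :
    pd i F x = pd i G x := by
  unfold pd
  congr 1
  exact Filter.EventuallyEq.fderiv_eq (by filter_upwards [hΘ.mem_nhds hx] using h)

lemma pd_const {x : Fin d → ℝ} {i : Fin d} (c : ℝ) : pd i (fun _ => c) x = 0 := by
  simp [pd]

lemma pd_add {u v : (Fin d → ℝ) → ℝ} {x : Fin d → ℝ} {i : Fin d}
    (hu : DifferentiableAt ℝ u x) (hv : DifferentiableAt ℝ v x) :
    pd i (fun y => u y + v y) x = pd i u x + pd i v x := by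
  simp [pd, fderiv_fun_add hu hv]

lemma pd_mul {u v : (Fin d → ℝ) → ℝ} {x : Fin d → ℝ} {i : Fin d}
    (hu : DifferentiableAt ℝ u x) (hv : DifferentiableAt ℝ v x) :
    pd i (fun y => u y * v y) x = pd i u x * v x + u x * pd i v x := by
  simp only [pd, fderiv_fun_mul hu hv, ContinuousLinearMap.add_apply,
    ContinuousLinearMap.coe_smul', Pi.smul_apply, smul_eq_mul]
  ring

/-- pd of a list sum of functions. -/
lemma pd_list_sum {x : Fin d → ℝ} {i : Fin d} :
    ∀ (Fs : List ((Fin d → ℝ) → ℝ)), (∀ F ∈ Fs, DifferentiableAt ℝ F x) →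
      DifferentiableAt ℝ (fun y => (Fs.map (· y)).sum) x ∧
      pd i (fun y => (Fs.map (· y)).sum) x = (Fs.map (fun F => pd i F x)).sum
  | [], _ => by
      constructor
      · simpa using differentiableAt_const (0 : ℝ)
      · simpa using pd_const 0
  | F :: Fs, h => by
      obtain ⟨ihd, ihp⟩ := pd_list_sum Fs (fun G hG => h G (List.mem_cons_of_mem _ hG))
      have hF : DifferentiableAt ℝ F x := h F (List.mem_cons_self)
      constructor
      · simp only [List.map_cons, List.sum_cons]
        exact hF.add ihd
      · simp only [List.map_cons, List.sum_cons]
        rw [pd_add hF ihd, ihp]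

/-! ### smoothness of iterated partials -/

variable {Θ : Set (Fin d → ℝ)}

lemma pd_contDiffOn {n : ℕ} {u : (Fin d → ℝ) → ℝ} {i : Fin d}
    (hΘ : IsOpen Θ) (h : ContDiffOn ℝ (n + 1 : ℕ) u Θ) :
    ContDiffOn ℝ (n : ℕ) (pd i u) Θ := by
  have h' : ContDiffOn ℝ ((n : WithTop ℕ∞) + 1) u Θ := by exact_mod_cast h
  have h2 := ((contDiffOn_succ_iff_fderiv_of_isOpen hΘ).mp h').2.2
  exact h2.clm_apply contDiffOn_const

lemma pdL_contDiffOn {u : (Fin d → ℝ) → ℝ} (hΘ : IsOpen Θ) :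
    ∀ (L : List (Fin d)) (m : ℕ), ContDiffOn ℝ (m + L.length : ℕ) u Θ →
      ContDiffOn ℝ (m : ℕ) (pdL L u) Θ
  | [], m, h => by simpa [pdL_nil] using h
  | i :: L, m, h => by
      rw [pdL_cons]
      refine pd_contDiffOn hΘ (pdL_contDiffOn hΘ L (m + 1) ?_)
      have : m + 1 + L.length = m + (i :: L).length := by simp; ring
      rw [this]; exact h

lemma pdL_differentiableAt {p : ℕ} {u : (Fin d → ℝ) → ℝ} (hΘ : IsOpen Θ)
    (hu : ContDiffOn ℝ (p : ℕ) u Θ) {L : List (Fin d)} (hL : L.length < p)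
    {x : Fin d → ℝ} (hx : x ∈ Θ) : DifferentiableAt ℝ (pdL L u) x := by
  have h1 : ContDiffOn ℝ (1 + L.length : ℕ) u Θ := by
    refine hu.of_le ?_
    exact_mod_cast Nat.cast_le.mpr (show 1 + L.length ≤ p by omega)
  have h2 := pdL_contDiffOn hΘ L 1 h1
  have h3 : DifferentiableOn ℝ (pdL L u) Θ := h2.differentiableOn (by norm_num)
  exact h3.differentiableAt (hΘ.mem_nhds hx)

/-! ### formal terms -/

/-- A formal term `c * ∂^β f * ∏_j ∂^{γ_j} g / g^(|γs|+1)`. -/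
structure QTerm (d : ℕ) where
  c : ℤ
  β : List (Fin d)
  γs : List (List (Fin d))

noncomputable def QTerm.eval (f g : (Fin d → ℝ) → ℝ) (T : QTerm d) (x : Fin d → ℝ) : ℝ :=
  (T.c : ℝ) * pdL T.β f x * (T.γs.map (fun γ => pdL γ g x)).prod / g x ^ (T.γs.length + 1)

/-- All ways to prepend `i` to one entry of the list. -/
def bump (i : Fin d) : List (List (Fin d)) → List (List (List (Fin d)))
  | [] => []
  | γ :: γs => ((i :: γ) :: γs) :: (bump i γs).map (γ :: ·)

def QTerm.derive (i : Fin d) (T : QTerm d) : List (QTerm d) :=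
  ⟨T.c, i :: T.β, T.γs⟩ ::
  ⟨-((T.γs.length : ℤ) + 1) * T.c, T.β, [i] :: T.γs⟩ ::
  (bump i T.γs).map (fun γs' => ⟨T.c, T.β, γs'⟩)

lemma bump_length (i : Fin d) : ∀ γs, (bump i γs).length = γs.length
  | [] => rfl
  | γ :: γs => by simp [bump, bump_length i γs]

lemma bump_mem (i : Fin d) : ∀ γs γs', γs' ∈ bump i γs →
    γs'.length = γs.length ∧
    (γs'.map List.length).sum = (γs.map List.length).sum + 1
  | [], γs', h => by simp [bump] at h
  | γ :: γs, γs', h => by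
      simp only [bump, List.mem_cons, List.mem_map] at h
      rcases h with rfl | ⟨γs'', hmem, rfl⟩
      · constructor <;> simp <;> omega
      · obtain ⟨h1, h2⟩ := bump_mem i γs γs'' hmem
        constructor <;> simp [h1, h2] <;> omega

section main

variable {p : ℕ} {f g : (Fin d → ℝ) → ℝ}
variable (hΘ : IsOpen Θ) (hf : ContDiffOn ℝ (p : ℕ) f Θ) (hg : ContDiffOn ℝ (p : ℕ) g Θ)
variable (hg0 : ∀ x ∈ Θ, g x ≠ 0)

include hΘ hg in
lemma prod_diff {x : Fin d → ℝ} (hx : x ∈ Θ) (γs : List (List (Fin d)))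
    (hlen : ∀ γ ∈ γs, γ.length < p) :
    DifferentiableAt ℝ (fun y => (γs.map (fun γ => pdL γ g y)).prod) x := by
  induction γs with
  | nil => simpa using differentiableAt_const (1 : ℝ)
  | cons γ γs ih =>
    have hγ : DifferentiableAt ℝ (pdL γ g) x :=
      pdL_differentiableAt hΘ hg (hlen γ (List.mem_cons_self)) hx
    simp only [List.map_cons, List.prod_cons]
    exact hγ.mul (ih (fun γ' h' => hlen γ' (List.mem_cons_of_mem _ h')))

include hΘ hg in
lemma prod_pd (i : Fin d) {x : Fin d → ℝ} (hx : x ∈ Θ) (γs : List (List (Fin d)))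
    (hlen : ∀ γ ∈ γs, γ.length < p) :
    pd i (fun y => (γs.map (fun γ => pdL γ g y)).prod) x
      = ((bump i γs).map (fun γs' => (γs'.map (fun γ => pdL γ g x)).prod)).sum := by
  induction γs with
  | nil => simpa [bump] using pd_const 1
  | cons γ γs ih =>
    have hlen' : ∀ γ' ∈ γs, γ'.length < p := fun γ' h' => hlen γ' (List.mem_cons_of_mem _ h')
    have hγ : DifferentiableAt ℝ (pdL γ g) x :=
      pdL_differentiableAt hΘ hg (hlen γ (List.mem_cons_self)) hx
    have ihd := prod_diff hΘ hg hx γs hlen'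
    simp only [List.map_cons, List.prod_cons]
    rw [pd_mul hγ ihd, ih hlen']
    have hpdγ : pd i (pdL γ g) = pdL (i :: γ) g := rfl
    simp [bump, List.map_map, Function.comp_def, List.sum_map_mul_left, hpdγ]

include hΘ hf hg hg0 in
lemma eval_differentiableAt {x : Fin d → ℝ} (hx : x ∈ Θ) (T : QTerm d)
    (hβ : T.β.length < p) (hγ : ∀ γ ∈ T.γs, γ.length < p) :
    DifferentiableAt ℝ (T.eval f g) x := by
  have hA : DifferentiableAt ℝ (pdL T.β f) x := pdL_differentiableAt hΘ hf hβ hx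
  have hP := prod_diff hΘ hg hx T.γs hγ
  have hp0 : 0 < p := by omega
  have hgx : DifferentiableAt ℝ g x := by
    have := pdL_differentiableAt (L := ([] : List (Fin d))) hΘ hg (by simpa using hp0) hx
    simpa [pdL_nil] using this
  have hg0x := hg0 x hx
  unfold QTerm.eval
  simp only [div_eq_mul_inv]
  exact (((differentiableAt_const _).mul hA).mul hP).mul
    ((hgx.pow _).inv (pow_ne_zero _ hg0x))

include hΘ hf hg hg0 in
lemma eval_pd (i : Fin d) {x : Fin d → ℝ} (hx : x ∈ Θ) (T : QTerm d)
    (hβ : T.β.length < p) (hγ : ∀ γ ∈ T.γs, γ.length < p) :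
    pd i (T.eval f g) x = ((T.derive i).map (fun T' => T'.eval f g x)).sum := by
  obtain ⟨c, β, γs⟩ := T
  simp only at hβ hγ
  have hp0 : 0 < p := by omega
  have hA : DifferentiableAt ℝ (pdL β f) x := pdL_differentiableAt hΘ hf hβ hx
  have hP : DifferentiableAt ℝ (fun y => (γs.map (fun γ => pdL γ g y)).prod) x :=
    prod_diff hΘ hg hx γs hγ
  have hgx : DifferentiableAt ℝ g x := by
    have := pdL_differentiableAt (L := ([] : List (Fin d))) hΘ hg (by simpa using hp0) hx
    simpa [pdL_nil] using this
  have hg0x : g x ≠ 0 := hg0 x hx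
  have hEv : DifferentiableAt ℝ (QTerm.eval f g ⟨c, β, γs⟩) x :=
    eval_differentiableAt hΘ hf hg hg0 hx ⟨c, β, γs⟩ hβ hγ
  have hA' := pd_hasDerivAt (i := i) hA
  have hP' := pd_hasDerivAt (i := i) hP
  have hg' := pd_hasDerivAt (i := i) hgx
  have hnum := (hA'.const_mul (c : ℝ)).mul hP'
  have hden := hg'.pow (γs.length + 1)
  have hden0 : (fun t : ℝ => g (x + t • (Pi.single i 1 : Fin d → ℝ))) 0 ^ (γs.length + 1) ≠ 0 := by
    simp only [zero_smul, add_zero]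
    exact pow_ne_zero _ hg0x
  have hq := hnum.div hden hden0
  have hval := (pd_eq_deriv hEv).trans hq.deriv
  rw [hval]
  have hPd := prod_pd hΘ hg i hx γs hγ
  have h1 : pd i (pdL β f) = pdL (i :: β) f := rfl
  have h2 : pd i g = pdL [i] g := rfl
  -- factor the bump part of the RHS
  have hmap : ((bump i γs).map (fun γs' => QTerm.eval f g ⟨c, β, γs'⟩ x))
      = ((bump i γs).map (fun γs' =>
          ((c : ℝ) * pdL β f x / g x ^ (γs.length + 1)) *
            (γs'.map (fun γ => pdL γ g x)).prod)) := by
    refine List.map_congr_left (fun γs' h => ?_)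
    have hlen := (bump_mem i γs γs' h).1
    simp only [QTerm.eval, hlen]
    ring
  simp only [QTerm.derive, List.map_cons, List.sum_cons, List.map_map, Function.comp_def]
  rw [hmap, List.sum_map_mul_left]
  simp only [QTerm.eval, List.map_cons, List.prod_cons, List.length_cons,
    zero_smul, add_zero, h1, h2, hPd, Nat.add_sub_cancel, Pi.pow_apply, Pi.mul_apply, Int.cast_mul, Int.cast_neg,
    Int.cast_add, Int.cast_natCast, Int.cast_one, Nat.cast_add, Nat.cast_one]
  field_simp
  ring


lemma list_sum_le {α : Type*} (l : List α) (u v : α → ℝ) (h : ∀ a ∈ l, u a ≤ v a) :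
    (l.map u).sum ≤ (l.map v).sum := by
  induction l with
  | nil => simp
  | cons a l ih =>
    simp only [List.map_cons, List.sum_cons]
    exact add_le_add (h a (List.mem_cons_self))
      (ih (fun b hb => h b (List.mem_cons_of_mem _ hb)))

lemma abs_list_sum_le {α : Type*} (l : List α) (u : α → ℝ) :
    |(l.map u).sum| ≤ (l.map (fun a => |u a|)).sum := by
  induction l with
  | nil => simp
  | cons a l ih =>
    simp only [List.map_cons, List.sum_cons]
    exact (abs_add_le _ _).trans (add_le_add_right ih _)

include hΘ hf hg hg0 in
lemma repr_lemma : ∀ L : List (Fin d), L.length ≤ p → ∃ ts : List (QTerm d),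
    (∀ T ∈ ts, T.β.length + (T.γs.map List.length).sum = L.length ∧ T.γs.length ≤ L.length) ∧
    (ts.map (fun T => |(T.c : ℝ)|)).sum ≤ (2 * p : ℝ) ^ L.length ∧
    ∀ x ∈ Θ, pdL L (fun t => f t / g t) x = (ts.map (fun T => T.eval f g x)).sum := by
  intro L
  induction L with
  | nil =>
    intro _
    refine ⟨[⟨1, [], []⟩], by simp, by simp, ?_⟩
    intro x hx
    simp [QTerm.eval, pdL_nil]
  | cons i L ih =>
    intro hL
    have hLp : L.length < p := by simp only [List.length_cons] at hL; omega
    have hL' : L.length ≤ p := le_of_lt hLp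
    obtain ⟨ts, hinv, hwt, hid⟩ := ih hL'
    -- bounds needed for each term of ts
    have hβlt : ∀ T ∈ ts, T.β.length < p := by
      intro T hT
      have := (hinv T hT).1
      omega
    have hγlt : ∀ T ∈ ts, ∀ γ ∈ T.γs, γ.length < p := by
      intro T hT γ hγmem
      have hdeg := (hinv T hT).1
      have : γ.length ≤ (T.γs.map List.length).sum :=
        List.le_sum_of_mem (List.mem_map_of_mem (f := List.length) hγmem)
      omega
    refine ⟨(ts.map (QTerm.derive i)).flatten, ?_, ?_, ?_⟩
    · -- combinatorial invariants
      intro T' hT'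
      rw [List.mem_flatten] at hT'
      obtain ⟨l, hl, hT'l⟩ := hT'
      rw [List.mem_map] at hl
      obtain ⟨T, hT, rfl⟩ := hl
      obtain ⟨hdeg, hk⟩ := hinv T hT
      simp only [QTerm.derive, List.mem_cons, List.mem_map] at hT'l
      rcases hT'l with rfl | rfl | ⟨γs', hb, rfl⟩
      · refine ⟨by simp; omega, by simp; omega⟩
      · refine ⟨by simp; omega, by simp; omega⟩
      · obtain ⟨hb1, hb2⟩ := bump_mem i T.γs γs' hb
        refine ⟨by simp [hb2]; omega, by simp [hb1]; omega⟩
    · -- weight bound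
      rw [List.map_flatten, List.sum_flatten, List.map_map, List.map_map]
      have hstep : ∀ T ∈ ts,
          (List.sum ∘ List.map (fun T : QTerm d => |(T.c : ℝ)|) ∘ QTerm.derive i) T
            ≤ (2 * p : ℝ) * |(T.c : ℝ)| := by
        intro T hT
        have hk : T.γs.length ≤ L.length := (hinv T hT).2
        simp only [Function.comp_apply, QTerm.derive, List.map_cons, List.sum_cons,
          List.map_map]
        have hconst : (List.map ((fun T : QTerm d => |(T.c : ℝ)|) ∘
            fun γs' => ⟨T.c, T.β, γs'⟩) (bump i T.γs)).sum
            = (T.γs.length : ℝ) * |(T.c : ℝ)| := by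
          have : ((fun T : QTerm d => |(T.c : ℝ)|) ∘ fun γs' : List (List (Fin d)) =>
              (⟨T.c, T.β, γs'⟩ : QTerm d)) = fun _ => |(T.c : ℝ)| := rfl
          rw [this, List.map_const', List.sum_replicate, bump_length, nsmul_eq_mul]
        rw [hconst]
        have habs : |((-((T.γs.length : ℤ) + 1) * T.c : ℤ) : ℝ)|
            = ((T.γs.length : ℝ) + 1) * |(T.c : ℝ)| := by
          push_cast
          rw [abs_mul, abs_neg, abs_of_nonneg (by positivity)]
        rw [habs]
        have hkp : (T.γs.length : ℝ) ≤ (p : ℝ) - 1 := by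
          have : T.γs.length ≤ p - 1 := by omega
          have h2 : (T.γs.length : ℝ) ≤ ((p - 1 : ℕ) : ℝ) := by exact_mod_cast this
          have h3 : ((p - 1 : ℕ) : ℝ) = (p : ℝ) - 1 := by
            have : 1 ≤ p := by omega
            push_cast [this]
            ring
          linarith
        nlinarith [abs_nonneg ((T.c : ℝ))]
      calc (ts.map (List.sum ∘ List.map (fun T : QTerm d => |(T.c : ℝ)|) ∘ QTerm.derive i)).sum
          ≤ (ts.map (fun T => (2 * p : ℝ) * |(T.c : ℝ)|)).sum := list_sum_le _ _ _ hstep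
        _ = (2 * p : ℝ) * (ts.map (fun T => |(T.c : ℝ)|)).sum := List.sum_map_mul_left _ _ _
        _ ≤ (2 * p : ℝ) * (2 * p : ℝ) ^ L.length := by
            have hp2 : (0 : ℝ) ≤ 2 * p := by positivity
            exact mul_le_mul_of_nonneg_left hwt hp2
        _ = (2 * p : ℝ) ^ (i :: L).length := by
            rw [List.length_cons, pow_succ]
            ring
    · -- the identity
      intro x hx
      have hstep : pdL (i :: L) (fun t => f t / g t) x
          = pd i (fun y => (ts.map (fun T => T.eval f g y)).sum) x := by
        rw [pdL_cons]
        exact pd_congr hΘ hx hid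
      rw [hstep]
      have hdiffs : ∀ F ∈ ts.map (QTerm.eval f g), DifferentiableAt ℝ F x := by
        intro F hF
        rw [List.mem_map] at hF
        obtain ⟨T, hT, rfl⟩ := hF
        exact eval_differentiableAt hΘ hf hg hg0 hx T (hβlt T hT) (hγlt T hT)
      obtain ⟨hds, hpd_sum⟩ := pd_list_sum (ts.map (QTerm.eval f g)) hdiffs
      have hfun : (fun y => ((ts.map (QTerm.eval f g)).map (· y)).sum)
          = fun y => (ts.map (fun T => T.eval f g y)).sum := by
        simp [List.map_map, Function.comp_def]
      rw [← hfun, hpd_sum, List.map_map]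
      have hcongr : ts.map ((fun F => pd i F x) ∘ QTerm.eval f g)
          = ts.map (fun T => ((T.derive i).map (fun T' => T'.eval f g x)).sum) := by
        refine List.map_congr_left (fun T hT => ?_)
        exact eval_pd hΘ hf hg hg0 i hx T (hβlt T hT) (hγlt T hT)
      rw [hcongr, List.map_flatten, List.sum_flatten, List.map_map, List.map_map]
      rfl


include hΘ hg in
lemma prodval_le {θ : Fin d → ℝ} (b : ℝ) (hb : 0 ≤ b) (l : List (List (Fin d)))
    (h : ∀ γ ∈ l, |pdL γ g θ| ≤ b) :
    |(l.map (fun γ => pdL γ g θ)).prod| ≤ b ^ l.length := by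
  induction l with
  | nil => simp
  | cons γ l ihl =>
    simp only [List.map_cons, List.prod_cons, List.length_cons, abs_mul, pow_succ]
    have h1 := h γ (List.mem_cons_self)
    have h2 := ihl (fun γ' h' => h γ' (List.mem_cons_of_mem _ h'))
    calc |pdL γ g θ| * |(l.map (fun γ => pdL γ g θ)).prod| ≤ b * b ^ l.length := by
          exact mul_le_mul h1 h2 (abs_nonneg _) hb
      _ = b ^ l.length * b := by ring


end main

end Stmt9Aux

/-- Appendix Lemma A.2, bound part: there is `K ∈ [1,∞)`,
depending only on `d` and `p`, such that
`|∂^α (f/g)(θ)| ≤ K |f(θ)/g(θ)| (φ(θ)ψ(θ)/|g(θ)|)^{|α|}`. -/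
theorem stmt9 (d p : ℕ) (hp : 1 ≤ p) :
    ∃ K : ℝ, 1 ≤ K ∧
      ∀ (Θ : Set (Fin d → ℝ)), IsOpen Θ →
      ∀ f g φ ψ : (Fin d → ℝ) → ℝ,
        ContDiffOn ℝ p f Θ → ContDiffOn ℝ p g Θ →
        (∀ θ ∈ Θ, g θ ≠ 0) →
        (∀ θ ∈ Θ, 1 ≤ φ θ) → (∀ θ ∈ Θ, 1 ≤ ψ θ) →
        (∀ θ ∈ Θ, ∀ L : List (Fin d), L.length ≤ p →
          |pdL L f θ| ≤ |f θ| * φ θ ^ L.length) →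
        (∀ θ ∈ Θ, ∀ L : List (Fin d), L.length ≤ p →
          |pdL L g θ| ≤ ψ θ) →
        ∀ θ ∈ Θ, ∀ L : List (Fin d), L.length ≤ p →
          |pdL L (fun t => f t / g t) θ| ≤
            K * |f θ / g θ| * (φ θ * ψ θ / |g θ|) ^ L.length := by
  classical
  have h2p1 : (1 : ℝ) ≤ 2 * p := by
    have : (1 : ℝ) ≤ (p : ℝ) := by exact_mod_cast hp
    linarith
  refine ⟨(2 * p : ℝ) ^ p, one_le_pow₀ h2p1, ?_⟩
  intro Θ hΘ f g φ ψ hf hg hg0 hφ hψ hDf hDg θ hθ L hL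
  obtain ⟨ts, hinv, hwt, hid⟩ := Stmt9Aux.repr_lemma hΘ hf hg hg0 L hL
  rw [hid θ hθ]
  set n := L.length with hn
  have hgθ : g θ ≠ 0 := hg0 θ hθ
  have hG : 0 < |g θ| := abs_pos.mpr hgθ
  have hφ1 : 1 ≤ φ θ := hφ θ hθ
  have hψ1 : 1 ≤ ψ θ := hψ θ hθ
  have hGψ : |g θ| ≤ ψ θ := by
    have := hDg θ hθ [] (by simp)
    simpa [Stmt9Aux.pdL_nil] using this
  have hbG1 : 1 ≤ ψ θ / |g θ| := (one_le_div hG).mpr hGψ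
  set F := |f θ| with hF
  set G := |g θ| with hGdef
  set a := φ θ with ha
  set b := ψ θ with hb
  have hterm : ∀ T ∈ ts, |T.eval f g θ|
      ≤ |(T.c : ℝ)| * (F / G * (a ^ n * (b / G) ^ n)) := by
    intro T hT
    obtain ⟨hdeg, hk⟩ := hinv T hT
    have hβn : T.β.length ≤ n := by omega
    have hβp : T.β.length ≤ p := le_trans hβn hL
    have hA : |pdL T.β f θ| ≤ F * a ^ T.β.length := hDf θ hθ T.β hβp
    have hγp : ∀ γ ∈ T.γs, |pdL γ g θ| ≤ b := by
      intro γ hγmem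
      refine hDg θ hθ γ ?_
      have : γ.length ≤ (T.γs.map List.length).sum :=
        List.le_sum_of_mem (List.mem_map_of_mem (f := List.length) hγmem)
      omega
    have hP : |(T.γs.map (fun γ => pdL γ g θ)).prod| ≤ b ^ T.γs.length :=
      Stmt9Aux.prodval_le hΘ hg b (le_trans zero_le_one hψ1) T.γs hγp
    have step1 : |T.eval f g θ|
        = |(T.c : ℝ)| * |pdL T.β f θ| * |(T.γs.map (fun γ => pdL γ g θ)).prod|
            / G ^ (T.γs.length + 1) := by
      rw [Stmt9Aux.QTerm.eval, abs_div, abs_mul, abs_mul, abs_pow]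
    rw [step1]
    have step2 : |(T.c : ℝ)| * |pdL T.β f θ| * |(T.γs.map (fun γ => pdL γ g θ)).prod|
          / G ^ (T.γs.length + 1)
        ≤ |(T.c : ℝ)| * (F * a ^ T.β.length) * b ^ T.γs.length / G ^ (T.γs.length + 1) := by
      gcongr <;> first | exact hA | exact hP | exact abs_nonneg _ | positivity
    refine step2.trans ?_
    have step3 : |(T.c : ℝ)| * (F * a ^ T.β.length) * b ^ T.γs.length / G ^ (T.γs.length + 1)
        = |(T.c : ℝ)| * (F / G * (a ^ T.β.length * (b / G) ^ T.γs.length)) := by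
      rw [div_pow]
      field_simp
      ring
    rw [step3]
    gcongr <;>
      first | exact hφ1 | exact hbG1 | exact hβn | exact hk | exact abs_nonneg _ | positivity
  have habs := Stmt9Aux.abs_list_sum_le ts (fun T => T.eval f g θ)
  have hsum2 := Stmt9Aux.list_sum_le ts (fun T => |T.eval f g θ|)
    (fun T => |(T.c : ℝ)| * (F / G * (a ^ n * (b / G) ^ n))) hterm
  have hfac : (ts.map (fun T => |(T.c : ℝ)| * (F / G * (a ^ n * (b / G) ^ n)))).sum
      = (ts.map (fun T => |(T.c : ℝ)|)).sum * (F / G * (a ^ n * (b / G) ^ n)) :=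
    List.sum_map_mul_right _ _ _
  have hB0 : 0 ≤ F / G * (a ^ n * (b / G) ^ n) := by positivity
  have hKn : (2 * p : ℝ) ^ n ≤ (2 * p : ℝ) ^ p := pow_le_pow_right₀ h2p1 hL
  have hrhs : |f θ / g θ| = F / G := abs_div _ _
  have hpow : (a * b / G) ^ n = a ^ n * (b / G) ^ n := by
    rw [mul_div_assoc, mul_pow]
  calc |(ts.map (fun T => T.eval f g θ)).sum|
      ≤ (ts.map (fun T => |T.eval f g θ|)).sum := habs
    _ ≤ (ts.map (fun T => |(T.c : ℝ)| * (F / G * (a ^ n * (b / G) ^ n)))).sum := hsum2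
    _ = (ts.map (fun T => |(T.c : ℝ)|)).sum * (F / G * (a ^ n * (b / G) ^ n)) := hfac
    _ ≤ (2 * p : ℝ) ^ n * (F / G * (a ^ n * (b / G) ^ n)) :=
        mul_le_mul_of_nonneg_right hwt hB0
    _ ≤ (2 * p : ℝ) ^ p * (F / G * (a ^ n * (b / G) ^ n)) :=
        mul_le_mul_of_nonneg_right hKn hB0
    _ = (2 * p : ℝ) ^ p * |f θ / g θ| * (a * b / G) ^ n := by
        rw [hrhs, hpow]
        ring
end

section
/- (Appendix Lemma A.1, bound part) Let Θ ⊆ ℝ^d, 𝒵 ⊆ ℝ^{d_z} be open, f : Θ → 𝒵 and g : 𝒵 → ℝ both p-times differentiable, and h = g ∘ f. Suppose there is K ≥ 1 and φ : Θ → [1,∞) with max{‖f(θ)‖, ‖∂_θ^α f(θ)‖} ≤ φ(θ) for all 0 ≠ α, |α| ≤ p, and |∂^β g(z)| ≤ K |g(z)| (1 + ‖z‖)^{|β|} for all z ∈ 𝒵 and 0 ≠ β, |β| ≤ p. Then there exists L ∈ [1,∞) such that |∂_θ^α h(θ)| ≤ L |h(θ)| φ(θ)^{2|α|} for all θ ∈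 Θ and all multi-indices 0 ≠ α with |α| ≤ p. -/
section aux
variable {d dz : ℕ} {F : Type*} [NormedAddCommGroup F] [NormedSpace ℝ F]

lemma pdL_cons (i : Fin d) (L : List (Fin d)) (f : (Fin d → ℝ) → F) :
    pdL (i :: L) f = pd i (pdL L f) := rfl

lemma contDiffOn_pd {s : Set (Fin d → ℝ)} (hs : IsOpen s) {u : (Fin d → ℝ) → F} {m : ℕ}
    (hu : ContDiffOn ℝ (m + 1 : ℕ) u s) (i : Fin d) : ContDiffOn ℝ (m : ℕ) (pd i u) s := by
  have h1 : ContDiffOn ℝ (m : ℕ) (fderiv ℝ u) s :=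
    hu.fderiv_of_isOpen hs (by exact_mod_cast le_refl ((m:WithTop ℕ∞) + 1))
  exact h1.clm_apply contDiffOn_const

lemma contDiffOn_pdL {s : Set (Fin d → ℝ)} (hs : IsOpen s) {u : (Fin d → ℝ) → F} {p : ℕ}
    (hu : ContDiffOn ℝ (p : ℕ) u s) (L : List (Fin d)) (m : ℕ) (h : L.length + m ≤ p) :
    ContDiffOn ℝ (m : ℕ) (pdL L u) s := by
  induction L generalizing m with
  | nil =>
      simp only [List.length_nil] at h
      exact hu.of_le (by exact_mod_cast (by omega : m ≤ p))
  | cons i L ih =>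
      rw [pdL_cons]
      simp only [List.length_cons] at h
      have := ih (m + 1) (by omega)
      exact contDiffOn_pd hs (by exact_mod_cast this) i

lemma diffAt_of_contDiffOn {s : Set (Fin d → ℝ)} (hs : IsOpen s) {u : (Fin d → ℝ) → F}
    (hu : ContDiffOn ℝ (1 : ℕ) u s) {x : (Fin d → ℝ)} (hx : x ∈ s) :
    DifferentiableAt ℝ u x :=
  (hu.differentiableOn (by simp)).differentiableAt
    (hs.mem_nhds hx)

lemma pd_eval {u : (Fin d → ℝ) → (Fin dz → ℝ)} {θ : Fin d → ℝ}
    (hu : DifferentiableAt ℝ u θ) (i : Fin d) (j : Fin dz) :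
    pd i (fun t => u t j) θ = pd i u θ j := by
  have h := ((ContinuousLinearMap.proj (R := ℝ) (φ := fun _ : Fin dz => ℝ)
    j).hasFDerivAt.comp θ hu.hasFDerivAt).fderiv
  simp only [pd]
  rw [show (fun t => u t j) = (⇑(ContinuousLinearMap.proj (R := ℝ)
    (φ := fun _ : Fin dz => ℝ) j) ∘ u) from rfl, h]
  rfl

lemma pd_comp {D : (Fin dz → ℝ) → ℝ} {f : (Fin d → ℝ) → (Fin dz → ℝ)} {θ : Fin d → ℝ}
    (hD : DifferentiableAt ℝ D (f θ)) (hf : DifferentiableAt ℝ f θ) (i : Fin d) :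
    pd i (fun t => D (f t)) θ = ∑ j, pd j D (f θ) * pd i f θ j := by
  have h := (hD.hasFDerivAt.comp θ hf.hasFDerivAt).fderiv
  simp only [pd]
  rw [show (fun t => D (f t)) = D ∘ f from rfl, h]
  have hsingle : ∀ x : Fin dz, (fun j => if x = j then (1:ℝ) else 0) =
      (Pi.single x 1 : Fin dz → ℝ) := by
    intro x; funext j; simp [Pi.single_apply, eq_comm]
  rw [ContinuousLinearMap.comp_apply]
  conv_lhs => rw [pi_eq_sum_univ ((fderiv ℝ f θ) (Pi.single i 1)), map_sum]
  refine Finset.sum_congr rfl fun j _ => ?_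
  rw [hsingle j, map_smul]
  simp [mul_comm, pd]

lemma pd_mul {a b : (Fin d → ℝ) → ℝ} {θ : Fin d → ℝ}
    (ha : DifferentiableAt ℝ a θ) (hb : DifferentiableAt ℝ b θ) (i : Fin d) :
    pd i (fun t => a t * b t) θ = pd i a θ * b θ + a θ * pd i b θ := by
  simp only [pd, fderiv_fun_mul ha hb]
  simp [mul_comm]
  ring

end aux

namespace Stmt11

variable {d dz : ℕ}

abbrev QF (d dz : ℕ) := List (Fin d) × Fin dz
abbrev Tm (d dz : ℕ) := List (Fin dz) × List (QF d dz)

noncomputable def prodQ (f : (Fin d → ℝ) → (Fin dz → ℝ)) (Qs : List (QF d dz))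
    (θ : Fin d → ℝ) : ℝ := (Qs.map (fun q => pdL q.1 f θ q.2)).prod

noncomputable def termVal (f : (Fin d → ℝ) → (Fin dz → ℝ)) (g : (Fin dz → ℝ) → ℝ)
    (T : Tm d dz) (θ : Fin d → ℝ) : ℝ := pdL T.1 g (f θ) * prodQ f T.2 θ

def stepQ (i : Fin d) : List (QF d dz) → List (List (QF d dz))
  | [] => []
  | q :: Qs => ((i :: q.1, q.2) :: Qs) :: (stepQ i Qs).map (q :: ·)

def stepTerm (i : Fin d) (T : Tm d dz) : List (Tm d dz) :=
  ((List.finRange dz).map fun j => (j :: T.1, ([i], j) :: T.2)) ++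
    (stepQ i T.2).map fun Qs => (T.1, Qs)

def goodT (n : ℕ) (T : Tm d dz) : Prop :=
  T.1 ≠ [] ∧ T.1.length ≤ n ∧ T.2.length ≤ n ∧ ∀ q ∈ T.2, q.1 ≠ [] ∧ q.1.length ≤ n

lemma length_stepQ (i : Fin d) (Qs : List (QF d dz)) : (stepQ i Qs).length = Qs.length := by
  induction Qs with
  | nil => rfl
  | cons q Qs ih => simp [stepQ, ih]

lemma length_stepTerm (i : Fin d) (T : Tm d dz) :
    (stepTerm i T).length = dz + T.2.length := by
  simp [stepTerm, length_stepQ]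

lemma mem_stepQ_length {i : Fin d} {Qs0 Qs' : List (QF d dz)} (h : Qs' ∈ stepQ i Qs0) :
    Qs'.length = Qs0.length := by
  induction Qs0 generalizing Qs' with
  | nil => simp [stepQ] at h
  | cons q Qs0 ih =>
      simp only [stepQ, List.mem_cons, List.mem_map] at h
      rcases h with rfl | ⟨Qs'', h, rfl⟩
      · simp
      · simp [ih h]

lemma mem_stepQ_mem {i : Fin d} {Qs0 Qs' : List (QF d dz)} (h : Qs' ∈ stepQ i Qs0)
    {q : QF d dz} (hq : q ∈ Qs') : q ∈ Qs0 ∨ ∃ q0 ∈ Qs0, q = (i :: q0.1, q0.2) := by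
  induction Qs0 generalizing Qs' with
  | nil => simp [stepQ] at h
  | cons q0 Qs0 ih =>
      simp only [stepQ, List.mem_cons, List.mem_map] at h
      rcases h with rfl | ⟨Qs'', h, rfl⟩
      · rcases List.mem_cons.1 hq with rfl | hq
        · exact Or.inr ⟨q0, by simp⟩
        · exact Or.inl (by simp [hq])
      · rcases List.mem_cons.1 hq with rfl | hq
        · exact Or.inl (by simp)
        · rcases ih h hq with h' | ⟨q1, hq1, rfl⟩
          · exact Or.inl (by simp [h'])
          · exact Or.inr ⟨q1, by simp [hq1]⟩

lemma goodT_stepTerm {n : ℕ} {T : Tm d dz} (hT : goodT n T) (i : Fin d)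
    {T' : Tm d dz} (hT' : T' ∈ stepTerm i T) : goodT (n + 1) T' := by
  obtain ⟨h1, h2, h3, h4⟩ := hT
  simp only [stepTerm, List.mem_append, List.mem_map, List.mem_finRange] at hT'
  rcases hT' with ⟨j, _, rfl⟩ | ⟨Qs, hQs, rfl⟩
  · refine ⟨by simp, by simp; omega, by simp; omega, ?_⟩
    intro q hq
    rcases List.mem_cons.1 hq with rfl | hq
    · exact ⟨by simp, by simp⟩
    · exact ⟨(h4 q hq).1, le_trans (h4 q hq).2 (by omega)⟩
  · refine ⟨h1, le_trans h2 (by omega), ?_, ?_⟩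
    · show Qs.length ≤ n + 1
      rw [mem_stepQ_length hQs]; omega
    · intro q hq
      rcases mem_stepQ_mem hQs hq with h | ⟨q0, hq0, rfl⟩
      · exact ⟨(h4 q h).1, le_trans (h4 q h).2 (by omega)⟩
      · exact ⟨by simp, by simpa using Nat.succ_le_succ (h4 q0 hq0).2⟩


section analytic

variable {p : ℕ} {Θ : Set (Fin d → ℝ)} {Z : Set (Fin dz → ℝ)}
  {f : (Fin d → ℝ) → (Fin dz → ℝ)} {g : (Fin dz → ℝ) → ℝ}
  (hΘ : IsOpen Θ) (hZ : IsOpen Z)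
  (hf : ContDiffOn ℝ (p : ℕ) f Θ) (hg : ContDiffOn ℝ (p : ℕ) g Z)
  (hmap : ∀ θ ∈ Θ, f θ ∈ Z)

include hΘ hf

lemma diffAt_f (hp : 1 ≤ p) {θ : Fin d → ℝ} (hθ : θ ∈ Θ) : DifferentiableAt ℝ f θ :=
  diffAt_of_contDiffOn hΘ (hf.of_le (by exact_mod_cast hp)) hθ

lemma diffAt_pdLf {L : List (Fin d)} (hL : L.length + 1 ≤ p) {θ : Fin d → ℝ} (hθ : θ ∈ Θ) :
    DifferentiableAt ℝ (pdL L f) θ :=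
  diffAt_of_contDiffOn hΘ (contDiffOn_pdL hΘ hf L 1 hL) hθ

lemma diffAt_qf {q : QF d dz} (hq : q.1.length + 1 ≤ p) {θ : Fin d → ℝ} (hθ : θ ∈ Θ) :
    DifferentiableAt ℝ (fun t => pdL q.1 f t q.2) θ := by
  have h := diffAt_pdLf hΘ hf hq hθ
  exact (ContinuousLinearMap.proj (R := ℝ) (φ := fun _ : Fin dz => ℝ)
    q.2).differentiableAt.comp θ h

lemma diffAt_prodQ {Qs : List (QF d dz)} (hQs : ∀ q ∈ Qs, q.1.length + 1 ≤ p)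
    {θ : Fin d → ℝ} (hθ : θ ∈ Θ) : DifferentiableAt ℝ (prodQ f Qs) θ := by
  induction Qs with
  | nil =>
      have : prodQ f ([] : List (QF d dz)) = fun _ => (1:ℝ) := by
        funext t; simp [prodQ]
      rw [this]; exact differentiableAt_const 1
  | cons q Qs ih =>
      have : prodQ f (q :: Qs) = fun t => pdL q.1 f t q.2 * prodQ f Qs t := by
        funext t; simp [prodQ]
      rw [this]
      exact (diffAt_qf hΘ hf (hQs q (by simp)) hθ).mul
        (ih fun q hq => hQs q (by simp [hq]))

include hZ hg hmap

lemma diffAt_comp {Lz : List (Fin dz)} (hLz : Lz.length + 1 ≤ p) {θ : Fin d → ℝ}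
    (hθ : θ ∈ Θ) : DifferentiableAt ℝ (fun t => pdL Lz g (f t)) θ := by
  have hD : DifferentiableAt ℝ (pdL Lz g) (f θ) :=
    diffAt_of_contDiffOn hZ (contDiffOn_pdL hZ hg Lz 1 hLz) (hmap θ hθ)
  exact hD.comp θ (diffAt_f hΘ hf (by omega) hθ)

lemma diffAt_termVal {n : ℕ} (hn : n + 1 ≤ p) {T : Tm d dz} (hT : goodT n T)
    {θ : Fin d → ℝ} (hθ : θ ∈ Θ) : DifferentiableAt ℝ (termVal f g T) θ := by
  have : termVal f g T = fun t => (fun t => pdL T.1 g (f t)) t * prodQ f T.2 t := rfl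
  rw [this]
  exact (diffAt_comp hΘ hZ hf hg hmap (by have := hT.2.1; omega) hθ).mul
    (diffAt_prodQ hΘ hf (fun q hq => by have := (hT.2.2.2 q hq).2; omega) hθ)

end analytic

section sums
variable {d : ℕ} {α : Type*}

lemma diffAt_listsum (v : α → (Fin d → ℝ) → ℝ) (Ts : List α) {θ : Fin d → ℝ}
    (h : ∀ T ∈ Ts, DifferentiableAt ℝ (v T) θ) :
    DifferentiableAt ℝ (fun t => (Ts.map (fun T => v T t)).sum) θ := by
  induction Ts with
  | nil => simpa using differentiableAt_const (0:ℝ)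
  | cons T Ts ih =>
      have : (fun t => ((T :: Ts).map (fun T => v T t)).sum) =
          fun t => v T t + (Ts.map (fun T => v T t)).sum := by
        funext t; simp
      rw [this]
      exact (h T (by simp)).add (ih fun T hT => h T (by simp [hT]))

lemma pd_listsum (i : Fin d) (v : α → (Fin d → ℝ) → ℝ) (Ts : List α) {θ : Fin d → ℝ}
    (h : ∀ T ∈ Ts, DifferentiableAt ℝ (v T) θ) :
    pd i (fun t => (Ts.map (fun T => v T t)).sum) θ = (Ts.map (fun T => pd i (v T) θ)).sum := by
  induction Ts with
  | nil => simp [pd]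
  | cons T Ts ih =>
      have e : (fun t => ((T :: Ts).map (fun T => v T t)).sum) =
          fun t => v T t + (fun t => (Ts.map (fun T => v T t)).sum) t := by
        funext t; simp
      rw [e]
      simp only [pd, fderiv_fun_add (h T (by simp))
        (diffAt_listsum v Ts fun T hT => h T (by simp [hT]))]
      simp only [ContinuousLinearMap.add_apply, List.map_cons, List.sum_cons]
      congr 1
      exact ih fun T hT => h T (by simp [hT])

lemma sum_map_flatMap {β : Type*} (l : List α) (F : α → List β) (v : β → ℝ) :
    ((l.flatMap F).map v).sum = (l.map (fun x => ((F x).map v).sum)).sum := by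
  induction l with
  | nil => simp
  | cons x l ih => simp [List.flatMap_cons, ih]

lemma abs_listsum_le (l : List ℝ) (B : ℝ) (h : ∀ x ∈ l, |x| ≤ B) :
    |l.sum| ≤ l.length * B := by
  induction l with
  | nil => simp
  | cons x l ih =>
      have := ih fun y hy => h y (by simp [hy])
      calc |(x :: l).sum| = |x + l.sum| := by simp
        _ ≤ |x| + |l.sum| := abs_add_le _ _
        _ ≤ B + l.length * B := add_le_add (h x (by simp)) this
        _ = (x :: l).length * B := by simp; ring

end sums

section compute

variable {p : ℕ} {Θ : Set (Fin d → ℝ)} {Z : Set (Fin dz → ℝ)}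
  {f : (Fin d → ℝ) → (Fin dz → ℝ)} {g : (Fin dz → ℝ) → ℝ}
  (hΘ : IsOpen Θ) (hZ : IsOpen Z)
  (hf : ContDiffOn ℝ (p : ℕ) f Θ) (hg : ContDiffOn ℝ (p : ℕ) g Z)
  (hmap : ∀ θ ∈ Θ, f θ ∈ Z)

include hΘ hf

lemma pd_prodQ (i : Fin d) {Qs : List (QF d dz)} (hQs : ∀ q ∈ Qs, q.1.length + 1 ≤ p)
    {θ : Fin d → ℝ} (hθ : θ ∈ Θ) :
    pd i (prodQ f Qs) θ = ((stepQ i Qs).map (fun Qs' => prodQ f Qs' θ)).sum := by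
  induction Qs with
  | nil =>
      have : prodQ f ([] : List (QF d dz)) = fun _ => (1:ℝ) := by
        funext t; simp [prodQ]
      rw [this]
      simp [pd, stepQ]
  | cons q Qs ih =>
      have e : prodQ f (q :: Qs) = fun t => pdL q.1 f t q.2 * prodQ f Qs t := by
        funext t; simp [prodQ]
      rw [e, pd_mul (diffAt_qf hΘ hf (hQs q (by simp)) hθ)
        (diffAt_prodQ hΘ hf (fun q hq => hQs q (by simp [hq])) hθ)]
      rw [pd_eval (diffAt_pdLf hΘ hf (hQs q (by simp)) hθ)]
      rw [ih fun q hq => hQs q (by simp [hq])]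
      simp only [stepQ, List.map_cons, List.sum_cons, List.map_map]
      congr 1
      rw [show ((fun Qs' => prodQ f Qs' θ) ∘ (q :: ·)) =
          fun Qs' => pdL q.1 f θ q.2 * prodQ f Qs' θ from by
        funext Qs'; simp [prodQ, Function.comp]]
      exact (List.sum_map_mul_left _ _ _).symm

include hZ hg hmap

lemma pd_termVal (i : Fin d) {T : Tm d dz} (h1 : T.1.length + 1 ≤ p)
    (h2 : ∀ q ∈ T.2, q.1.length + 1 ≤ p) {θ : Fin d → ℝ} (hθ : θ ∈ Θ) :
    pd i (termVal f g T) θ = ((stepTerm i T).map (fun T' => termVal f g T' θ)).sum := by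
  have hA : DifferentiableAt ℝ (fun t => pdL T.1 g (f t)) θ :=
    diffAt_comp hΘ hZ hf hg hmap h1 hθ
  have hB : DifferentiableAt ℝ (prodQ f T.2) θ := diffAt_prodQ hΘ hf h2 hθ
  have e : termVal f g T = fun t => (fun t => pdL T.1 g (f t)) t * prodQ f T.2 t := rfl
  rw [e, pd_mul hA hB]
  have hD : DifferentiableAt ℝ (pdL T.1 g) (f θ) :=
    diffAt_of_contDiffOn hZ (contDiffOn_pdL hZ hg T.1 1 h1) (hmap θ hθ)
  rw [pd_comp hD (diffAt_f hΘ hf (by omega) hθ) i]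
  rw [pd_prodQ hΘ hf i h2 hθ]
  simp only [stepTerm, List.map_append, List.sum_append, List.map_map]
  congr 1
  · rw [Finset.sum_mul, Fin.sum_univ_def]
    congr 1
    refine List.map_congr_left fun j _ => ?_
    show pd j (pdL T.1 g) (f θ) * pd i f θ j * prodQ f T.2 θ =
      termVal f g (j :: T.1, ([i], j) :: T.2) θ
    simp only [termVal, prodQ, List.map_cons, List.prod_cons]
    rw [show pdL (j :: T.1) g = pd j (pdL T.1 g) from rfl]
    rw [show pdL [i] f = pd i f from rfl]
    ring
  · rw [show ((fun T' => termVal f g T' θ) ∘ (fun Qs => (T.1, Qs))) =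
        fun Qs => pdL T.1 g (f θ) * prodQ f Qs θ from by
      funext Qs; simp [termVal, Function.comp]]
    exact (List.sum_map_mul_left _ _ _).symm

end compute

lemma prodQ_bound {f : (Fin d → ℝ) → (Fin dz → ℝ)} {θ : Fin d → ℝ} {φK : ℝ} (hφ1 : 1 ≤ φK)
    (Qs : List (QF d dz)) (hb : ∀ q ∈ Qs, |pdL q.1 f θ q.2| ≤ φK) :
    |prodQ f Qs θ| ≤ φK ^ Qs.length := by
  induction Qs with
  | nil => simp [prodQ]
  | cons q Qs ih =>
      have e : prodQ f (q :: Qs) θ = pdL q.1 f θ q.2 * prodQ f Qs θ := by simp [prodQ]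
      rw [e, abs_mul, List.length_cons, pow_succ, mul_comm (φK ^ Qs.length) φK]
      exact mul_le_mul (hb q (by simp)) (ih fun q hq => hb q (by simp [hq]))
        (abs_nonneg _) (le_trans zero_le_one hφ1)

section main

variable {p : ℕ} {Θ : Set (Fin d → ℝ)} {Z : Set (Fin dz → ℝ)}
  {f : (Fin d → ℝ) → (Fin dz → ℝ)} {g : (Fin dz → ℝ) → ℝ}
  (hΘ : IsOpen Θ) (hZ : IsOpen Z)
  (hf : ContDiffOn ℝ (p : ℕ) f Θ) (hg : ContDiffOn ℝ (p : ℕ) g Z)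
  (hmap : ∀ θ ∈ Θ, f θ ∈ Z)

include hΘ hZ hf hg hmap

lemma repr_lemma (hp : 1 ≤ p) : ∀ (Ld : List (Fin d)), Ld ≠ [] → Ld.length ≤ p →
    ∃ Ts : List (Tm d dz), Ts.length ≤ (dz + p) ^ Ld.length ∧
      (∀ T ∈ Ts, goodT Ld.length T) ∧
      ∀ θ ∈ Θ, pdL Ld (fun t => g (f t)) θ = (Ts.map (fun T => termVal f g T θ)).sum := by
  intro Ld
  induction Ld with
  | nil => intro h; exact absurd rfl h
  | cons i Ld ih =>
      intro _ hlen
      simp only [List.length_cons] at hlen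
      by_cases hLd : Ld = []
      · subst hLd
        refine ⟨(List.finRange dz).map (fun j => ([j], [([i], j)])), ?_, ?_, ?_⟩
        · simp only [List.length_map, List.length_finRange, List.length_cons,
            List.length_nil, zero_add, pow_one]
          omega
        · intro T hT
          simp only [List.mem_map, List.mem_finRange] at hT
          obtain ⟨j, _, rfl⟩ := hT
          exact ⟨by simp, by simp, by simp, fun q hq => by
            simp only [List.mem_singleton] at hq; subst hq; exact ⟨by simp, by simp⟩⟩
        · intro θ hθ
          show pd i (fun t => g (f t)) θ = _
          have hD : DifferentiableAt ℝ g (f θ) :=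
            diffAt_of_contDiffOn hZ (hg.of_le (by exact_mod_cast hp)) (hmap θ hθ)
          rw [pd_comp hD (diffAt_f hΘ hf hp hθ) i, Fin.sum_univ_def, List.map_map]
          congr 1
          refine List.map_congr_left fun j _ => ?_
          show pd j g (f θ) * pd i f θ j = termVal f g ([j], [([i], j)]) θ
          simp only [termVal, prodQ, List.map_cons, List.map_nil, List.prod_cons,
            List.prod_nil, mul_one]
          rfl
      · obtain ⟨Ts, hlenTs, hgood, heq⟩ := ih hLd (by omega)
        set n := Ld.length with hn
        have hn1 : 1 ≤ n := by
          have := List.length_pos_iff.mpr hLd; omega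
        have hnp : n + 1 ≤ p := hlen
        refine ⟨Ts.flatMap (stepTerm i), ?_, ?_, ?_⟩
        · rw [List.length_flatMap]
          have hb : ∀ x ∈ Ts.map (List.length ∘ stepTerm i), x ≤ dz + p := by
            intro x hx
            simp only [List.mem_map, Function.comp] at hx
            obtain ⟨T, hT, rfl⟩ := hx
            rw [length_stepTerm]
            have := (hgood T hT).2.2.1
            omega
          calc (Ts.map (List.length ∘ stepTerm i)).sum
              ≤ (Ts.map (List.length ∘ stepTerm i)).length • (dz + p) :=
                List.sum_le_card_nsmul _ _ hb
            _ = Ts.length * (dz + p) := by simp [smul_eq_mul]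
            _ ≤ (dz + p) ^ n * (dz + p) := Nat.mul_le_mul_right _ hlenTs
            _ = (dz + p) ^ (i :: Ld).length := by
                rw [List.length_cons, ← hn, pow_succ]
        · intro T' hT'
          rw [List.mem_flatMap] at hT'
          obtain ⟨T, hT, hT'⟩ := hT'
          rw [List.length_cons]
          exact goodT_stepTerm (hgood T hT) i hT'
        · intro θ hθ
          have hEq : pdL Ld (fun t => g (f t)) =ᶠ[nhds θ]
              fun t => (Ts.map (fun T => termVal f g T t)).sum :=
            Filter.eventuallyEq_of_mem (hΘ.mem_nhds hθ) (fun t ht => heq t ht)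
          show pd i (pdL Ld fun t => g (f t)) θ = _
          have e1 : pd i (pdL Ld fun t => g (f t)) θ =
              pd i (fun t => (Ts.map (fun T => termVal f g T t)).sum) θ := by
            simp only [pd]; rw [hEq.fderiv_eq]
          rw [e1, pd_listsum i (termVal f g) Ts
            (fun T hT => diffAt_termVal hΘ hZ hf hg hmap hnp (hgood T hT) hθ)]
          rw [sum_map_flatMap]
          congr 1
          refine List.map_congr_left fun T hT => ?_
          exact pd_termVal hΘ hZ hf hg hmap i
            (by have := (hgood T hT).2.1; omega)
            (fun q hq => by have := ((hgood T hT).2.2.2 q hq).2; omega) hθ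

end main

end Stmt11


open Stmt11

/-- Appendix Lemma A.1, bound part: there is `L ∈ [1,∞)`
(depending only on `d, d_z, p, K`) with
`|∂^α (g ∘ f)(θ)| ≤ L |g(f(θ))| φ(θ)^{2|α|}` for `0 ≠ α`, `|α| ≤ p`. -/
theorem stmt11 (d dz p : ℕ) (hp : 1 ≤ p) (K : ℝ) (hK : 1 ≤ K) :
    ∃ L : ℝ, 1 ≤ L ∧
      ∀ (Θ : Set (Fin d → ℝ)) (Z : Set (Fin dz → ℝ)), IsOpen Θ → IsOpen Z →
      ∀ (f : (Fin d → ℝ) → (Fin dz → ℝ)) (g : (Fin dz → ℝ) → ℝ)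
        (φ : (Fin d → ℝ) → ℝ),
        ContDiffOn ℝ p f Θ → ContDiffOn ℝ p g Z →
        (∀ θ ∈ Θ, f θ ∈ Z) →
        (∀ θ ∈ Θ, 1 ≤ φ θ) →
        (∀ θ ∈ Θ, ‖f θ‖ ≤ φ θ) →
        (∀ θ ∈ Θ, ∀ Ld : List (Fin d), Ld ≠ [] → Ld.length ≤ p →
          ‖pdL Ld f θ‖ ≤ φ θ) →
        (∀ z ∈ Z, ∀ Lz : List (Fin dz), Lz ≠ [] → Lz.length ≤ p →
          |pdL Lz g z| ≤ K * |g z| * (1 + ‖z‖) ^ Lz.length) →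
        ∀ θ ∈ Θ, ∀ Ld : List (Fin d), Ld ≠ [] → Ld.length ≤ p →
          |pdL Ld (fun t => g (f t)) θ| ≤ L * |g (f θ)| * φ θ ^ (2 * Ld.length) := by
  have hbase : (1:ℝ) ≤ 2 * ((dz:ℝ) + p) := by
    have h1 : (1:ℝ) ≤ (p:ℝ) := by exact_mod_cast hp
    have h0 : (0:ℝ) ≤ (dz:ℝ) := Nat.cast_nonneg _
    nlinarith
  refine ⟨K * (2 * ((dz:ℝ) + p)) ^ p, ?_, ?_⟩
  · calc (1:ℝ) = 1 * 1 := by ring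
      _ ≤ K * (2 * ((dz:ℝ) + p)) ^ p :=
        mul_le_mul hK (one_le_pow₀ hbase) zero_le_one (by linarith)
  · intro Θ Z hΘ hZ f g φ hf hg hmap hφ1 hφf hfb hgb θ hθ Ld hne hlen
    obtain ⟨Ts, hTs, hgood, heq⟩ := repr_lemma hΘ hZ hf hg hmap hp Ld hne hlen
    rw [heq θ hθ]
    set n := Ld.length with hn
    have hφ : 1 ≤ φ θ := hφ1 θ hθ
    have hgabs : (0:ℝ) ≤ |g (f θ)| := abs_nonneg _
    set B : ℝ := K * |g (f θ)| * (2 * φ θ) ^ n * φ θ ^ n with hB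
    have hKg : (0:ℝ) ≤ K * |g (f θ)| := mul_nonneg (by linarith) hgabs
    have hBnn : (0:ℝ) ≤ B := by
      rw [hB]
      have h2φ : (0:ℝ) ≤ 2 * φ θ := by linarith
      positivity
    have hbound : ∀ x ∈ Ts.map (fun T => termVal f g T θ), |x| ≤ B := by
      intro x hx
      simp only [List.mem_map] at hx
      obtain ⟨T, hT, rfl⟩ := hx
      obtain ⟨hT1, hT2, hT3, hT4⟩ := hgood T hT
      have hg' : |pdL T.1 g (f θ)| ≤ K * |g (f θ)| * (1 + ‖f θ‖) ^ T.1.length :=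
        hgb (f θ) (hmap θ hθ) T.1 hT1 (le_trans hT2 hlen)
      have h1φ : (1 + ‖f θ‖) ≤ 2 * φ θ := by
        have := hφf θ hθ; linarith
      have hpow : (1 + ‖f θ‖) ^ T.1.length ≤ (2 * φ θ) ^ n := by
        calc (1 + ‖f θ‖) ^ T.1.length ≤ (2 * φ θ) ^ T.1.length :=
              pow_le_pow_left₀ (by positivity) h1φ _
          _ ≤ (2 * φ θ) ^ n := pow_le_pow_right₀ (by linarith) hT2
      have hq : ∀ q ∈ T.2, |pdL q.1 f θ q.2| ≤ φ θ := by
        intro q hq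
        have hb := hfb θ hθ q.1 (hT4 q hq).1 (le_trans (hT4 q hq).2 hlen)
        calc |pdL q.1 f θ q.2| ≤ ‖pdL q.1 f θ‖ := by
              simpa [Real.norm_eq_abs] using norm_le_pi_norm (pdL q.1 f θ) q.2
          _ ≤ φ θ := hb
      have hprod : |prodQ f T.2 θ| ≤ φ θ ^ n :=
        le_trans (prodQ_bound hφ T.2 hq) (pow_le_pow_right₀ hφ hT3)
      calc |termVal f g T θ| = |pdL T.1 g (f θ)| * |prodQ f T.2 θ| := abs_mul _ _
        _ ≤ (K * |g (f θ)| * (1 + ‖f θ‖) ^ T.1.length) * (φ θ ^ n) :=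
            mul_le_mul hg' hprod (abs_nonneg _)
              (mul_nonneg hKg (by positivity))
        _ ≤ (K * |g (f θ)| * (2 * φ θ) ^ n) * (φ θ ^ n) :=
            mul_le_mul_of_nonneg_right (mul_le_mul_of_nonneg_left hpow hKg)
              (by positivity)
        _ = B := by rw [hB]
    have habs := abs_listsum_le _ B hbound
    have hTl : ((Ts.map (fun T => termVal f g T θ)).length : ℝ) ≤ ((dz:ℝ) + p) ^ n := by
      rw [List.length_map]
      calc (Ts.length : ℝ) ≤ (((dz + p) ^ n : ℕ) : ℝ) := by exact_mod_cast hTs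
        _ = ((dz:ℝ) + p) ^ n := by push_cast; ring
    have e2 : ((dz:ℝ) + p) ^ n * B = K * (2 * ((dz:ℝ) + p)) ^ n * (|g (f θ)| * φ θ ^ (2 * n)) := by
      rw [hB, mul_pow, mul_pow, two_mul n, pow_add]
      ring
    calc |(Ts.map (fun T => termVal f g T θ)).sum|
        ≤ ((Ts.map (fun T => termVal f g T θ)).length : ℝ) * B := habs
      _ ≤ ((dz:ℝ) + p) ^ n * B := mul_le_mul_of_nonneg_right hTl hBnn
      _ = K * (2 * ((dz:ℝ) + p)) ^ n * (|g (f θ)| * φ θ ^ (2 * n)) := e2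
      _ ≤ K * (2 * ((dz:ℝ) + p)) ^ p * (|g (f θ)| * φ θ ^ (2 * n)) := by
          refine mul_le_mul_of_nonneg_right ?_ (by positivity)
          exact mul_le_mul_of_nonneg_left (pow_le_pow_right₀ hbase hlen) (by linarith)
      _ = K * (2 * ((dz:ℝ) + p)) ^ p * |g (f θ)| * φ θ ^ (2 * n) := by ring
end
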